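/- (Incremental update of a_{ij}.) For all integers i, j with 1 ≤ i < j ≤ p: Σ_{l=p+1−i}^{n−i} (z' l) · (z' (l−j+i)) = Σ_{l=p+1−i}^{n−i} (z l) · (z (l−j+i)) + (z' r − z r) · c, where c = 0 if r < p+1−j or r > n−i; c = z (r+j−i) if p+1−j ≤ r < p+1−i; c = z (r−j+i) if n−j < r ≤ n−i; and c = z (r+j−i) + z (r−j+i) if p+1−i ≤ r ≤ n−j. -/

import Mathlib

/-- Incremental update of `a_{ij}` (`i < j`): if `z'` differs from `z` only at
the single index `r` (with `1 ≤ r ≤ n`), then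
`Σ_{l=p+1−i}^{n−i} z' l · z' (l−j+i) = Σ_{l=p+1−i}^{n−i} z l · z (l−j+i) + (z' r − z r) · c`,
where `c = 0` if `r < p+1−j` or `r > n−i`; `c = z (r+j−i)` if `p+1−j ≤ r < p+1−i`;
`c = z (r−j+i)` if `n−j < r ≤ n−i`; and `c = z (r+j−i) + z (r−j+i)` if
`p+1−i ≤ r ≤ n−j`. -/
theorem incremental_update_aij
    (p n : ℤ) (hp : 1 ≤ p) (hn : 2 * p ≤ n)
    (z z' : ℤ → ℝ) (r : ℤ) (hr1 : 1 ≤ r) (hrn : r ≤ n)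
    (hagree : ∀ l : ℤ, l ≠ r → z' l = z l) :
    ∀ i j : ℤ, 1 ≤ i → i < j → j ≤ p →
      ∑ l ∈ Finset.Icc (p + 1 - i) (n - i), z' l * z' (l - j + i) =
        (∑ l ∈ Finset.Icc (p + 1 - i) (n - i), z l * z (l - j + i)) +
          (z' r - z r) *
            (if r < p + 1 - j then 0
             else if r < p + 1 - i then z (r + j - i)
             else if r ≤ n - j then z (r + j - i) + z (r - j + i)
             else if r ≤ n - i then z (r - j + i)
             else 0) := by
  intro i j hi hij hjp
  set S := Finset.Icc (p + 1 - i) (n - i) with hS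
  have key : ∀ l ∈ S,
      z' l * z' (l - j + i) - z l * z (l - j + i) =
        (if l = r then (z' r - z r) * z (r - j + i) else 0) +
        (if l = r + j - i then (z' r - z r) * z (r + j - i) else 0) := by
    intro l _
    by_cases h1 : l = r
    · subst h1
      rw [if_pos rfl, if_neg (by omega), hagree (l - j + i) (by omega)]
      ring
    · by_cases h2 : l = r + j - i
      · subst h2
        rw [if_neg h1, if_pos rfl]
        have he : r + j - i - j + i = r := by ring
        rw [he, hagree _ h1]
        ring
      · rw [if_neg h1, if_neg h2, hagree l h1,
          hagree (l - j + i) (by omega)]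
        ring
  have hsum : ∑ l ∈ S, (z' l * z' (l - j + i) - z l * z (l - j + i)) =
      (z' r - z r) *
        (if r < p + 1 - j then 0
         else if r < p + 1 - i then z (r + j - i)
         else if r ≤ n - j then z (r + j - i) + z (r - j + i)
         else if r ≤ n - i then z (r - j + i)
         else 0) := by
    rw [Finset.sum_congr rfl key, Finset.sum_add_distrib,
      Finset.sum_ite_eq' S r (fun _ => (z' r - z r) * z (r - j + i)),
      Finset.sum_ite_eq' S (r + j - i) (fun _ => (z' r - z r) * z (r + j - i))]
    simp only [hS, Finset.mem_Icc]
    split_ifs <;> (try (exfalso; omega)) <;> ring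
  have hd : ∑ l ∈ S, (z' l * z' (l - j + i) - z l * z (l - j + i)) =
      (∑ l ∈ S, z' l * z' (l - j + i)) - ∑ l ∈ S, z l * z (l - j + i) :=
    Finset.sum_sub_distrib _ _
  rw [hd] at hsum
  linarith
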